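/- The image under the Harvey–Lawson map f of the union of the three coordinate axes (ℂ × {0} × {0}) ∪ ({0} × ℂ × {0}) ∪ ({0} × {0} × ℂ) equals the union of three rays in the plane {x₁ = 0} ⊂ ℝ³, namely {(0, t, t) : t ≥ 0} ∪ {(0, t, 0) : t ≤ 0} ∪ {(0, 0, t) : t ≤ 0}; in other words, the discriminant locus of the Harvey–Lawson fibration consists of these three rays. -/

import Mathlib

open Complex

/-- The Harvey–Lawson map `f : ℂ³ → ℝ³`. -/
noncomputable def HarveyLawson (z : Fin 3 → ℂ) : Fin 3 → ℝ :=
  ![(z 0 * z 1 * z 2).im,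
    ‖z 0‖ ^ 2 - ‖z 1‖ ^ 2,
    ‖z 0‖ ^ 2 - ‖z 2‖ ^ 2]

/-- The image under the Harvey–Lawson map of the union of the three coordinate axes
equals the union of the three rays `{(0,t,t) : t ≥ 0} ∪ {(0,t,0) : t ≤ 0} ∪
{(0,0,t) : t ≤ 0}` in the plane `{x₁ = 0} ⊂ ℝ³`: the discriminant locus of the
Harvey–Lawson fibration. -/
theorem harveyLawson_discriminant_locus :
    HarveyLawson ''
        ({z : Fin 3 → ℂ | z 1 = 0 ∧ z 2 = 0} ∪
         {z : Fin 3 → ℂ | z 0 = 0 ∧ z 2 = 0} ∪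
         {z : Fin 3 → ℂ | z 0 = 0 ∧ z 1 = 0}) =
      {x : Fin 3 → ℝ | ∃ t : ℝ, 0 ≤ t ∧ x = ![0, t, t]} ∪
      {x : Fin 3 → ℝ | ∃ t : ℝ, t ≤ 0 ∧ x = ![0, t, 0]} ∪
      {x : Fin 3 → ℝ | ∃ t : ℝ, t ≤ 0 ∧ x = ![0, 0, t]} := by
  ext x
  simp only [Set.mem_image, Set.mem_union, Set.mem_setOf_eq]
  constructor
  · rintro ⟨z, hz, rfl⟩
    obtain ((⟨h1, h2⟩ | ⟨h0, h2⟩) | ⟨h0, h1⟩) := hz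
    · left; left
      exact ⟨‖z 0‖ ^ 2, by positivity, by
        simp [HarveyLawson, h1, h2]⟩
    · left; right
      exact ⟨-(‖z 1‖ ^ 2), neg_nonpos.mpr (by positivity), by
        simp [HarveyLawson, h0, h2]⟩
    · right
      exact ⟨-(‖z 2‖ ^ 2), neg_nonpos.mpr (by positivity), by
        simp [HarveyLawson, h0, h1]⟩
  · rintro ((⟨t, ht, rfl⟩ | ⟨t, ht, rfl⟩) | ⟨t, ht, rfl⟩)
    · refine ⟨![(Real.sqrt t : ℂ), 0, 0], Or.inl (Or.inl ⟨rfl, rfl⟩), ?_⟩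
      simp [HarveyLawson, Complex.norm_real, _root_.abs_of_nonneg (Real.sqrt_nonneg t),
        Real.sq_sqrt ht]
    · refine ⟨![0, (Real.sqrt (-t) : ℂ), 0], Or.inl (Or.inr ⟨rfl, rfl⟩), ?_⟩
      have : Real.sqrt (-t) ^ 2 = -t := Real.sq_sqrt (by linarith)
      simp [HarveyLawson, Complex.norm_real, _root_.abs_of_nonneg (Real.sqrt_nonneg (-t)), this]
    · refine ⟨![0, 0, (Real.sqrt (-t) : ℂ)], Or.inr ⟨rfl, rfl⟩, ?_⟩
      have : Real.sqrt (-t) ^ 2 = -t := Real.sq_sqrt (by linarith)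
      simp [HarveyLawson, Complex.norm_real, _root_.abs_of_nonneg (Real.sqrt_nonneg (-t)), this]
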